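/- Let f : ℕ → ℝ satisfy |f(k+1) − f(k)| ≤ κ for all k ∈ ℕ (f is Lipschitz with constant κ). Then for all λ_1, λ_2 with 0 ≤ λ_1 ≤ λ_2 < λ_c, the means Σ_k f(k) Θ_{λ_1}({k}) and Σ_k f(k) Θ_{λ_2}({k}) are absolutely convergent and |Σ_k f(k) Θ_{λ_2}({k}) − Σ_k f(k) Θ_{λ_1}({k})| ≤ κ · (ρ(λ_2) − ρ(λ_1)). In particular, the functions Φ(ρ) = E_{Θ_{λ(ρ)}}[g] and Ψ(ρ) = E_{Θ_{λ(ρ)}}[h] are Lipschitz in the density ρ whenever g and h are Lipschitz. -/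

import Mathlib

open scoped BigOperators

/-- The coefficients `a_k = (∏_{j=0}^{k-1} h(j)) / (∏_{j=1}^{k} g(j))`, with `a_0 = 1`. -/
noncomputable def coefA (g h : ℕ → ℝ) (k : ℕ) : ℝ :=
  (∏ j ∈ Finset.range k, h j) / ∏ j ∈ Finset.range k, g (j + 1)

/-- The partition function `Z(λ) = Σ_{k ≥ 0} a_k λ^k`. -/
noncomputable def partZ (g h : ℕ → ℝ) (lam : ℝ) : ℝ :=
  ∑' k : ℕ, coefA g h k * lam ^ k

/-- The critical value `λ_c = liminf_{k → ∞} g(k+1)/h(k)` (as an extended real). -/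
noncomputable def lamCrit (g h : ℕ → ℝ) : EReal :=
  Filter.liminf (fun k : ℕ => ((g (k + 1) / h k : ℝ) : EReal)) Filter.atTop

/-- The probability mass function `Θ_λ({k}) = a_k λ^k / Z(λ)`. -/
noncomputable def thetaPMF (g h : ℕ → ℝ) (lam : ℝ) (k : ℕ) : ℝ :=
  coefA g h k * lam ^ k / partZ g h lam

/- ### Auxiliary lemmas -/

lemma coefA_pos (g h : ℕ → ℝ) (hg : ∀ k : ℕ, 1 ≤ k → 0 < g k) (hh : ∀ k : ℕ, 0 < h k)
    (k : ℕ) : 0 < coefA g h k :=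
  div_pos (Finset.prod_pos fun j _ => hh j)
    (Finset.prod_pos fun j _ => hg (j + 1) (Nat.succ_le_succ (Nat.zero_le j)))

lemma coefA_succ (g h : ℕ → ℝ) (k : ℕ) :
    coefA g h (k + 1) = coefA g h k * (h k / g (k + 1)) := by
  unfold coefA
  rw [Finset.prod_range_succ, Finset.prod_range_succ]
  ring

lemma lip_onesided (f : ℕ → ℝ) (κ : ℝ) (hf : ∀ k : ℕ, |f (k + 1) - f k| ≤ κ) :
    ∀ d i : ℕ, |f (i + d) - f i| ≤ κ * d := by
  intro d
  induction d with
  | zero => intro i; simp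
  | succ d ih =>
    intro i
    have h1 : |f (i + d + 1) - f i| ≤ |f (i + d + 1) - f (i + d)| + |f (i + d) - f i| := by
      have := abs_add_le (f (i + d + 1) - f (i + d)) (f (i + d) - f i)
      simpa using this
    have h2 : |f (i + d + 1) - f i| ≤ κ + κ * d :=
      h1.trans (add_le_add (hf (i + d)) (ih i))
    have : (((d : ℕ) + 1 : ℕ) : ℝ) = (d : ℝ) + 1 := by push_cast; ring
    calc |f (i + (d + 1)) - f i| = |f (i + d + 1) - f i| := by rw [Nat.add_succ]
      _ ≤ κ + κ * d := h2
      _ = κ * ((d : ℕ) + 1 : ℕ) := by push_cast; ring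

lemma lip_pair (f : ℕ → ℝ) (κ : ℝ) (hf : ∀ k : ℕ, |f (k + 1) - f k| ≤ κ) (i j : ℕ) :
    |f j - f i| ≤ κ * |(j : ℝ) - (i : ℝ)| := by
  rcases le_total i j with hij | hij
  · obtain ⟨d, rfl⟩ := Nat.exists_eq_add_of_le hij
    have e : |((i + d : ℕ) : ℝ) - (i : ℝ)| = (d : ℝ) := by
      push_cast
      rw [add_sub_cancel_left]
      exact abs_of_nonneg (Nat.cast_nonneg d)
    rw [e]
    exact lip_onesided f κ hf d i
  · obtain ⟨d, rfl⟩ := Nat.exists_eq_add_of_le hij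
    have e : |(j : ℝ) - ((j + d : ℕ) : ℝ)| = (d : ℝ) := by
      push_cast
      rw [abs_sub_comm, add_sub_cancel_left]
      exact abs_of_nonneg (Nat.cast_nonneg d)
    rw [e, abs_sub_comm]
    exact lip_onesided f κ hf d j

lemma pow_cross (lam₁ lam₂ : ℝ) (h0 : 0 ≤ lam₁) (h12 : lam₁ ≤ lam₂) {i j : ℕ} (hij : i ≤ j) :
    lam₁ ^ j * lam₂ ^ i ≤ lam₂ ^ j * lam₁ ^ i := by
  obtain ⟨d, rfl⟩ := Nat.exists_eq_add_of_le hij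
  have h2 : (0 : ℝ) ≤ lam₂ := h0.trans h12
  have hd : lam₁ ^ d ≤ lam₂ ^ d := pow_le_pow_left₀ h0 h12 d
  calc lam₁ ^ (i + d) * lam₂ ^ i = (lam₁ ^ i * lam₂ ^ i) * lam₁ ^ d := by
        rw [pow_add]; ring
    _ ≤ (lam₁ ^ i * lam₂ ^ i) * lam₂ ^ d := by
        apply mul_le_mul_of_nonneg_left hd
        positivity
    _ = lam₂ ^ (i + d) * lam₁ ^ i := by rw [pow_add]; ring

lemma sign_D (a : ℕ → ℝ) (ha : ∀ k, 0 ≤ a k) (lam₁ lam₂ : ℝ)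
    (h0 : 0 ≤ lam₁) (h12 : lam₁ ≤ lam₂) (j i : ℕ) :
    0 ≤ ((j : ℝ) - (i : ℝ)) *
      (a j * lam₂ ^ j * (a i * lam₁ ^ i) - a j * lam₁ ^ j * (a i * lam₂ ^ i)) := by
  have ha2 : 0 ≤ a j * a i := mul_nonneg (ha j) (ha i)
  rcases le_total i j with hij | hij
  · apply mul_nonneg
    · have : (i : ℝ) ≤ (j : ℝ) := by exact_mod_cast hij
      linarith
    · have hpc := pow_cross lam₁ lam₂ h0 h12 hij
      have e : a j * lam₂ ^ j * (a i * lam₁ ^ i) - a j * lam₁ ^ j * (a i * lam₂ ^ i)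
          = (a j * a i) * (lam₂ ^ j * lam₁ ^ i - lam₁ ^ j * lam₂ ^ i) := by ring
      rw [e]
      exact mul_nonneg ha2 (sub_nonneg.2 hpc)
  · have hx : (j : ℝ) - (i : ℝ) ≤ 0 := by
      have : (j : ℝ) ≤ (i : ℝ) := by exact_mod_cast hij
      linarith
    have hpc := pow_cross lam₁ lam₂ h0 h12 hij
    -- hpc : lam₁ ^ i * lam₂ ^ j ≤ lam₂ ^ i * lam₁ ^ j
    have hy : a j * lam₂ ^ j * (a i * lam₁ ^ i) - a j * lam₁ ^ j * (a i * lam₂ ^ i) ≤ 0 := by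
      have e : a j * lam₂ ^ j * (a i * lam₁ ^ i) - a j * lam₁ ^ j * (a i * lam₂ ^ i)
          = (a j * a i) * (lam₁ ^ i * lam₂ ^ j - lam₂ ^ i * lam₁ ^ j) := by ring
      rw [e]
      apply mul_nonpos_of_nonneg_of_nonpos ha2
      linarith
    calc (0 : ℝ) ≤ (-((j : ℝ) - (i : ℝ))) *
          (-(a j * lam₂ ^ j * (a i * lam₁ ^ i) - a j * lam₁ ^ j * (a i * lam₂ ^ i))) :=
        mul_nonneg (neg_nonneg.2 hx) (neg_nonneg.2 hy)
      _ = ((j : ℝ) - (i : ℝ)) *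
          (a j * lam₂ ^ j * (a i * lam₁ ^ i) - a j * lam₁ ^ j * (a i * lam₂ ^ i)) := by ring

lemma summable_weight (g h : ℕ → ℝ) (hg : ∀ k : ℕ, 1 ≤ k → 0 < g k) (hh : ∀ k : ℕ, 0 < h k)
    (c : ℝ) (hc0 : 0 < c) (N : ℕ) (hN : ∀ k, N ≤ k → c * h k ≤ g (k + 1))
    (lam lam₂ : ℝ) (h0 : 0 ≤ lam) (hle : lam ≤ lam₂) (hlt : lam₂ < c) :
    Summable fun k : ℕ => ((k : ℝ) + 1) * (coefA g h k * lam ^ k) := by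
  have h20 : 0 ≤ lam₂ := h0.trans hle
  set q : ℝ := lam₂ / c with hq
  have hq0 : 0 ≤ q := div_nonneg h20 hc0.le
  have hq1 : q < 1 := (div_lt_one hc0).2 hlt
  have hpnn : ∀ k : ℕ, 0 ≤ coefA g h k * lam ^ k := fun k =>
    mul_nonneg (coefA_pos g h hg hh k).le (pow_nonneg h0 k)
  have hstep : ∀ k, N ≤ k →
      coefA g h (k + 1) * lam ^ (k + 1) ≤ q * (coefA g h k * lam ^ k) := by
    intro k hk
    have hgk : 0 < g (k + 1) := hg (k + 1) (Nat.succ_le_succ (Nat.zero_le k))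
    have hhk := hh k
    have key : lam * h k / g (k + 1) ≤ lam₂ / c := by
      rw [div_le_div_iff₀ hgk hc0]
      have h3 : lam * h k * c ≤ lam₂ * h k * c :=
        mul_le_mul_of_nonneg_right (mul_le_mul_of_nonneg_right hle hhk.le) hc0.le
      have h4 : lam₂ * (c * h k) ≤ lam₂ * g (k + 1) :=
        mul_le_mul_of_nonneg_left (hN k hk) h20
      nlinarith
    calc coefA g h (k + 1) * lam ^ (k + 1)
        = (coefA g h k * lam ^ k) * (lam * h k / g (k + 1)) := by
          rw [coefA_succ, pow_succ]; ring
      _ ≤ (coefA g h k * lam ^ k) * (lam₂ / c) :=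
          mul_le_mul_of_nonneg_left key (hpnn k)
      _ = q * (coefA g h k * lam ^ k) := by rw [hq]; ring
  set C : ℝ := coefA g h N * lam ^ N with hC
  have hC0 : 0 ≤ C := hpnn N
  have hgeo : ∀ m : ℕ, coefA g h (N + m) * lam ^ (N + m) ≤ C * q ^ m := by
    intro m
    induction m with
    | zero => simp [hC]
    | succ m ih =>
      have h1 := hstep (N + m) (Nat.le_add_right N m)
      calc coefA g h (N + m + 1) * lam ^ (N + m + 1)
          ≤ q * (coefA g h (N + m) * lam ^ (N + m)) := h1
        _ ≤ q * (C * q ^ m) := mul_le_mul_of_nonneg_left ih hq0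
        _ = C * q ^ (m + 1) := by ring
  have hSgeo : Summable fun m : ℕ => (((m + N : ℕ) : ℝ) + 1) * (C * q ^ m) := by
    have hq1' : ‖q‖ < 1 := by rw [Real.norm_eq_abs, abs_of_nonneg hq0]; exact hq1
    have h1 : Summable fun m : ℕ => (m : ℝ) * q ^ m := by
      have := summable_pow_mul_geometric_of_norm_lt_one 1 hq1'
      simpa using this
    have h2 : Summable fun m : ℕ => q ^ m := summable_geometric_of_lt_one hq0 hq1
    have := (h2.mul_left (((N : ℝ) + 1) * C)).add (h1.mul_left C)
    apply this.congr
    intro m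
    push_cast
    ring
  have hshift : Summable fun m : ℕ =>
      (((m + N : ℕ) : ℝ) + 1) * (coefA g h (m + N) * lam ^ (m + N)) := by
    apply Summable.of_nonneg_of_le _ _ hSgeo
    · intro m
      exact mul_nonneg (by positivity) (hpnn (m + N))
    · intro m
      have hg' := hgeo m
      rw [Nat.add_comm N m] at hg'
      exact mul_le_mul_of_nonneg_left hg' (by positivity)
  exact (summable_nat_add_iff N).1 hshift

set_option maxHeartbeats 1000000 in
lemma double_identity (p q φ : ℕ → ℝ)
    (hp : Summable fun k => ‖p k‖) (hq : Summable fun k => ‖q k‖)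
    (hφp : Summable fun k => ‖φ k * p k‖) (hφq : Summable fun k => ‖φ k * q k‖) :
    ∑' z : ℕ × ℕ, (φ z.1 - φ z.2) * (q z.1 * p z.2 - p z.1 * q z.2)
      = 2 * ((∑' k : ℕ, φ k * q k) * (∑' k : ℕ, p k) - (∑' k : ℕ, φ k * p k) * (∑' k : ℕ, q k)) := by
  have S1 : Summable fun z : ℕ × ℕ => (φ z.1 * q z.1) * p z.2 :=
    summable_mul_of_summable_norm (f := fun k => φ k * q k) (g := p) hφq hp
  have S2 : Summable fun z : ℕ × ℕ => (φ z.1 * p z.1) * q z.2 :=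
    summable_mul_of_summable_norm (f := fun k => φ k * p k) (g := q) hφp hq
  have S3 : Summable fun z : ℕ × ℕ => q z.1 * (φ z.2 * p z.2) :=
    summable_mul_of_summable_norm (f := q) (g := fun k => φ k * p k) hq hφp
  have S4 : Summable fun z : ℕ × ℕ => p z.1 * (φ z.2 * q z.2) :=
    summable_mul_of_summable_norm (f := p) (g := fun k => φ k * q k) hp hφq
  have E1 : ∑' z : ℕ × ℕ, (φ z.1 * q z.1) * p z.2 = (∑' k, φ k * q k) * (∑' k, p k) :=
    (tsum_mul_tsum_of_summable_norm (f := fun k => φ k * q k) (g := p) hφq hp).symm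
  have E2 : ∑' z : ℕ × ℕ, (φ z.1 * p z.1) * q z.2 = (∑' k, φ k * p k) * (∑' k, q k) :=
    (tsum_mul_tsum_of_summable_norm (f := fun k => φ k * p k) (g := q) hφp hq).symm
  have E3 : ∑' z : ℕ × ℕ, q z.1 * (φ z.2 * p z.2) = (∑' k, q k) * (∑' k, φ k * p k) :=
    (tsum_mul_tsum_of_summable_norm (f := q) (g := fun k => φ k * p k) hq hφp).symm
  have E4 : ∑' z : ℕ × ℕ, p z.1 * (φ z.2 * q z.2) = (∑' k, p k) * (∑' k, φ k * q k) :=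
    (tsum_mul_tsum_of_summable_norm (f := p) (g := fun k => φ k * q k) hp hφq).symm
  have e : ∀ z : ℕ × ℕ, (φ z.1 - φ z.2) * (q z.1 * p z.2 - p z.1 * q z.2)
      = ((φ z.1 * q z.1) * p z.2 - (φ z.1 * p z.1) * q z.2)
        - (q z.1 * (φ z.2 * p z.2) - p z.1 * (φ z.2 * q z.2)) := by
    intro z; ring
  rw [tsum_congr e, Summable.tsum_sub (S1.sub S2) (S3.sub S4), Summable.tsum_sub S1 S2, Summable.tsum_sub S3 S4,
    E1, E2, E3, E4]
  ring

/-- Bundle of facts at a single activity `lam ∈ [0, lam₂]`. -/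
lemma bundle (g h : ℕ → ℝ) (hg : ∀ k : ℕ, 1 ≤ k → 0 < g k) (hh : ∀ k : ℕ, 0 < h k)
    (c : ℝ) (hc0 : 0 < c) (N : ℕ) (hN : ∀ k, N ≤ k → c * h k ≤ g (k + 1))
    (f : ℕ → ℝ) (C : ℝ) (hfb : ∀ k : ℕ, |f k| ≤ C * ((k : ℝ) + 1))
    (lam lam₂ : ℝ) (h0 : 0 ≤ lam) (hle : lam ≤ lam₂) (hlt : lam₂ < c) :
    (Summable fun k : ℕ => ‖coefA g h k * lam ^ k‖)
    ∧ (Summable fun k : ℕ => ‖(k : ℝ) * (coefA g h k * lam ^ k)‖)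
    ∧ (Summable fun k : ℕ => ‖f k * (coefA g h k * lam ^ k)‖)
    ∧ 0 < partZ g h lam
    ∧ (Summable fun k : ℕ => |f k * thetaPMF g h lam k|)
    ∧ (∑' k : ℕ, f k * thetaPMF g h lam k
        = (∑' k : ℕ, f k * (coefA g h k * lam ^ k)) / partZ g h lam)
    ∧ (∑' k : ℕ, (k : ℝ) * thetaPMF g h lam k
        = (∑' k : ℕ, (k : ℝ) * (coefA g h k * lam ^ k)) / partZ g h lam) := by
  have hpnn : ∀ k : ℕ, 0 ≤ coefA g h k * lam ^ k := fun k =>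
    mul_nonneg (coefA_pos g h hg hh k).le (pow_nonneg h0 k)
  have Swt := summable_weight g h hg hh c hc0 N hN lam lam₂ h0 hle hlt
  have Sp0 : Summable fun k : ℕ => coefA g h k * lam ^ k := by
    apply Summable.of_nonneg_of_le hpnn _ Swt
    intro k
    have hk1 : (1 : ℝ) ≤ (k : ℝ) + 1 := by
      have := Nat.cast_nonneg (α := ℝ) k; linarith
    exact le_mul_of_one_le_left (hpnn k) hk1
  have Sk0 : Summable fun k : ℕ => (k : ℝ) * (coefA g h k * lam ^ k) := by
    apply Summable.of_nonneg_of_le _ _ Swt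
    · intro k; exact mul_nonneg (Nat.cast_nonneg k) (hpnn k)
    · intro k
      apply mul_le_mul_of_nonneg_right _ (hpnn k)
      linarith [Nat.cast_nonneg (α := ℝ) k]
  have Sf0 : Summable fun k : ℕ => |f k| * (coefA g h k * lam ^ k) := by
    apply Summable.of_nonneg_of_le _ _ (Swt.mul_left C)
    · intro k; exact mul_nonneg (abs_nonneg _) (hpnn k)
    · intro k
      calc |f k| * (coefA g h k * lam ^ k)
          ≤ (C * ((k : ℝ) + 1)) * (coefA g h k * lam ^ k) :=
            mul_le_mul_of_nonneg_right (hfb k) (hpnn k)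
        _ = C * (((k : ℝ) + 1) * (coefA g h k * lam ^ k)) := by ring
  have hZ : 0 < partZ g h lam := by
    have hP0 : coefA g h 0 * lam ^ 0 = 1 := by simp [coefA]
    have hle' := Summable.le_tsum Sp0 0 (fun j _ => hpnn j)
    rw [hP0] at hle'
    exact lt_of_lt_of_le one_pos hle'
  refine ⟨?_, ?_, ?_, hZ, ?_, ?_, ?_⟩
  · exact Sp0.congr fun k => (Real.norm_of_nonneg (hpnn k)).symm
  · exact Sk0.congr fun k =>
      (Real.norm_of_nonneg (mul_nonneg (Nat.cast_nonneg k) (hpnn k))).symm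
  · apply Sf0.congr
    intro k
    rw [Real.norm_eq_abs, abs_mul, abs_of_nonneg (hpnn k)]
  · apply (Sf0.div_const (partZ g h lam)).congr
    intro k
    rw [show f k * thetaPMF g h lam k
        = f k * (coefA g h k * lam ^ k) / partZ g h lam from (mul_div_assoc _ _ _).symm,
      abs_div, abs_mul, abs_of_nonneg (hpnn k), abs_of_pos hZ]
  · rw [← tsum_div_const]
    exact tsum_congr fun k => (mul_div_assoc _ _ _).symm
  · rw [← tsum_div_const]
    exact tsum_congr fun k => (mul_div_assoc _ _ _).symm

set_option maxHeartbeats 1000000 in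
/-- If `f : ℕ → ℝ` is Lipschitz with constant `κ`
(`|f(k+1) − f(k)| ≤ κ`), then for `0 ≤ λ₁ ≤ λ₂ < λ_c` the means
`Σ_k f(k) Θ_{λᵢ}({k})` are absolutely convergent and
`|Σ_k f(k) Θ_{λ₂}({k}) − Σ_k f(k) Θ_{λ₁}({k})| ≤ κ (ρ(λ₂) − ρ(λ₁))`. -/
theorem lipschitz_mean_estimate
    (g h : ℕ → ℝ) (hg0 : g 0 = 0) (hg : ∀ k : ℕ, 1 ≤ k → 0 < g k) (hh : ∀ k : ℕ, 0 < h k)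
    (f : ℕ → ℝ) (κ : ℝ) (hf : ∀ k : ℕ, |f (k + 1) - f k| ≤ κ)
    (lam₁ lam₂ : ℝ) (h₁ : 0 ≤ lam₁) (h₁₂ : lam₁ ≤ lam₂)
    (h₂c : (lam₂ : EReal) < lamCrit g h) :
    Summable (fun k : ℕ => |f k * thetaPMF g h lam₁ k|)
    ∧ Summable (fun k : ℕ => |f k * thetaPMF g h lam₂ k|)
    ∧ |(∑' k : ℕ, f k * thetaPMF g h lam₂ k) - ∑' k : ℕ, f k * thetaPMF g h lam₁ k|
        ≤ κ * ((∑' k : ℕ, (k : ℝ) * thetaPMF g h lam₂ k)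
                - ∑' k : ℕ, (k : ℝ) * thetaPMF g h lam₁ k) := by
  have hκ0 : 0 ≤ κ := (abs_nonneg _).trans (hf 0)
  have h₂0 : 0 ≤ lam₂ := h₁.trans h₁₂
  obtain ⟨c, hc1, hc2⟩ := EReal.exists_between_coe_real h₂c
  have hcR : lam₂ < c := by exact_mod_cast hc1
  have hc0 : 0 < c := lt_of_le_of_lt h₂0 hcR
  have hev : ∀ᶠ k in Filter.atTop, c * h k ≤ g (k + 1) := by
    have hlt := Filter.eventually_lt_of_lt_liminf hc2
    filter_upwards [hlt] with k hk
    have hk' : (c : ℝ) < g (k + 1) / h k := by exact_mod_cast hk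
    exact le_of_lt ((lt_div_iff₀ (hh k)).1 hk')
  obtain ⟨N, hN⟩ := Filter.eventually_atTop.1 hev
  -- bound on |f|
  have hfb : ∀ k : ℕ, |f k| ≤ (|f 0| + κ) * ((k : ℝ) + 1) := by
    intro k
    have h1 := lip_pair f κ hf 0 k
    have h2 : |(k : ℝ) - ((0 : ℕ) : ℝ)| = (k : ℝ) := by
      simp [abs_of_nonneg (Nat.cast_nonneg (α := ℝ) k)]
    rw [h2] at h1
    have h3 : |f k| - |f 0| ≤ |f k - f 0| := abs_sub_abs_le_abs_sub _ _
    have h4 : (0 : ℝ) ≤ (k : ℝ) := Nat.cast_nonneg k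
    nlinarith [abs_nonneg (f 0)]
  obtain ⟨SP₁, SkP₁, SfP₁, hZ₁, Sθ₁, Ef₁, Ek₁⟩ :=
    bundle g h hg hh c hc0 N hN f (|f 0| + κ) hfb lam₁ lam₂ h₁ h₁₂ hcR
  obtain ⟨SP₂, SkP₂, SfP₂, hZ₂, Sθ₂, Ef₂, Ek₂⟩ :=
    bundle g h hg hh c hc0 N hN f (|f 0| + κ) hfb lam₂ lam₂ h₂0 le_rfl hcR
  refine ⟨Sθ₁, Sθ₂, ?_⟩
  have ha : ∀ k, 0 ≤ coefA g h k := fun k => (coefA_pos g h hg hh k).le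
  set P₁ : ℕ → ℝ := fun k => coefA g h k * lam₁ ^ k with hP₁def
  set P₂ : ℕ → ℝ := fun k => coefA g h k * lam₂ ^ k with hP₂def
  set D : ℕ × ℕ → ℝ := fun z => P₂ z.1 * P₁ z.2 - P₁ z.1 * P₂ z.2 with hDdef
  -- identities
  have idf := double_identity P₁ P₂ f SP₁ SP₂ SfP₁ SfP₂
  have idn := double_identity P₁ P₂ (fun k => (k : ℝ)) SP₁ SP₂ SkP₁ SkP₂
  -- summability of the dominating double series
  have SD : Summable fun z : ℕ × ℕ => ((z.1 : ℝ) - (z.2 : ℝ)) * D z := by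
    have S1 := summable_mul_of_summable_norm SkP₂ SP₁
    have S2 := summable_mul_of_summable_norm SkP₁ SP₂
    have S3 := summable_mul_of_summable_norm SP₂ SkP₁
    have S4 := summable_mul_of_summable_norm SP₁ SkP₂
    apply (((S1.sub S2).sub (S3.sub S4)).congr)
    intro z
    simp only [hDdef]
    ring
  -- sign of the dominating terms
  have hsg : ∀ z : ℕ × ℕ, 0 ≤ ((z.1 : ℝ) - (z.2 : ℝ)) * D z := by
    intro z
    exact sign_D (coefA g h) ha lam₁ lam₂ h₁ h₁₂ z.1 z.2
  -- termwise domination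
  have hterm : ∀ z : ℕ × ℕ,
      ‖(f z.1 - f z.2) * D z‖ ≤ κ * (((z.1 : ℝ) - (z.2 : ℝ)) * D z) := by
    intro z
    calc ‖(f z.1 - f z.2) * D z‖ = |f z.1 - f z.2| * |D z| := by
          rw [Real.norm_eq_abs, abs_mul]
      _ ≤ (κ * |(z.1 : ℝ) - (z.2 : ℝ)|) * |D z| :=
          mul_le_mul_of_nonneg_right (lip_pair f κ hf z.2 z.1) (abs_nonneg _)
      _ = κ * |((z.1 : ℝ) - (z.2 : ℝ)) * D z| := by rw [abs_mul]; ring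
      _ = κ * (((z.1 : ℝ) - (z.2 : ℝ)) * D z) := by rw [abs_of_nonneg (hsg z)]
  have Snorm : Summable fun z : ℕ × ℕ => ‖(f z.1 - f z.2) * D z‖ := by
    apply Summable.of_nonneg_of_le (fun z => norm_nonneg _) hterm (SD.mul_left κ)
  have hmain : |∑' z : ℕ × ℕ, (f z.1 - f z.2) * D z|
      ≤ κ * ∑' z : ℕ × ℕ, ((z.1 : ℝ) - (z.2 : ℝ)) * D z := by
    calc |∑' z : ℕ × ℕ, (f z.1 - f z.2) * D z|
        = ‖∑' z : ℕ × ℕ, (f z.1 - f z.2) * D z‖ := (Real.norm_eq_abs _).symm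
      _ ≤ ∑' z : ℕ × ℕ, ‖(f z.1 - f z.2) * D z‖ := norm_tsum_le_tsum_norm Snorm
      _ ≤ ∑' z : ℕ × ℕ, κ * (((z.1 : ℝ) - (z.2 : ℝ)) * D z) :=
          Summable.tsum_le_tsum hterm Snorm (SD.mul_left κ)
      _ = κ * ∑' z : ℕ × ℕ, ((z.1 : ℝ) - (z.2 : ℝ)) * D z := tsum_mul_left
  rw [idf] at hmain
  rw [idn] at hmain
  -- abbreviations
  set Φ₁ : ℝ := ∑' k : ℕ, f k * P₁ k
  set Φ₂ : ℝ := ∑' k : ℕ, f k * P₂ k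
  set R₁ : ℝ := ∑' k : ℕ, (k : ℝ) * P₁ k
  set R₂ : ℝ := ∑' k : ℕ, (k : ℝ) * P₂ k
  set Z₁ : ℝ := ∑' k : ℕ, P₁ k
  set Z₂ : ℝ := ∑' k : ℕ, P₂ k
  have hZ₁' : partZ g h lam₁ = Z₁ := rfl
  have hZ₂' : partZ g h lam₂ = Z₂ := rfl
  have hZ₁p : 0 < Z₁ := by rw [← hZ₁']; exact hZ₁
  have hZ₂p : 0 < Z₂ := by rw [← hZ₂']; exact hZ₂
  -- from hmain : |2 * (Φ₂ * Z₁ - Φ₁ * Z₂)| ≤ κ * (2 * (R₂ * Z₁ - R₁ * Z₂))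
  have hkey : |Φ₂ * Z₁ - Φ₁ * Z₂| ≤ κ * (R₂ * Z₁ - R₁ * Z₂) := by
    rw [abs_mul, abs_two] at hmain
    linarith [hmain]
  rw [Ef₁, Ef₂, Ek₁, Ek₂, hZ₁', hZ₂']
  have hZ₁0 : Z₁ ≠ 0 := ne_of_gt hZ₁p
  have hZ₂0 : Z₂ ≠ 0 := ne_of_gt hZ₂p
  have e1 : Φ₂ / Z₂ - Φ₁ / Z₁ = (Φ₂ * Z₁ - Φ₁ * Z₂) / (Z₁ * Z₂) := by
    field_simp
  have e2 : R₂ / Z₂ - R₁ / Z₁ = (R₂ * Z₁ - R₁ * Z₂) / (Z₁ * Z₂) := by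
    field_simp
  rw [e1, e2, abs_div, abs_of_pos (mul_pos hZ₁p hZ₂p), ← mul_div_assoc]
  exact div_le_div_of_nonneg_right hkey (mul_pos hZ₁p hZ₂p).le
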